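/- Let A be an interpolatory mask (A_{2j} = D δ_j). Define the prediction-correction filters B (with symbol zI, i.e. B_1 = I and B_k = 0 otherwise), Ã = D^{−1} δ, and B̃ with (B̃^T)_k = (−1)^{1−k} A_{1−k} D^{−1}. Then these four masks form a biorthogonal system: D_{Ã^T} S_A = D_{B̃^T} S_B = id and D_{Ã^T} S_B = D_{B̃^T} S_A = 0. -/
import Mathlib


open scoped BigOperators
open Matrix

/-- Subdivision operator `(S_M c)_j = ∑_k M_{j-2k} c_k`. -/
noncomputable def subd {m : ℕ} (M : ℤ → Matrix (Fin 2 × Fin m) (Fin 2 × Fin m) ℝ)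
    (c : ℤ → Fin 2 × Fin m → ℝ) : ℤ → Fin 2 × Fin m → ℝ :=
  fun j => ∑ᶠ k : ℤ, (M (j - 2 * k)).mulVec (c k)

/-- Decomposition operator `(D_M c)_j = ∑_i M_{i-2j} c_i`. -/
noncomputable def decomp {m : ℕ} (M : ℤ → Matrix (Fin 2 × Fin m) (Fin 2 × Fin m) ℝ)
    (c : ℤ → Fin 2 × Fin m → ℝ) : ℤ → Fin 2 × Fin m → ℝ :=
  fun j => ∑ᶠ i : ℤ, (M (i - 2 * j)).mulVec (c i)

/-- The matrix `D = diag(1, 1/2) ⊗ I_m`. -/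
noncomputable def Dmat (m : ℕ) : Matrix (Fin 2 × Fin m) (Fin 2 × Fin m) ℝ :=
  Matrix.of fun p q => if p = q then (if p.1 = 0 then 1 else 1 / 2) else 0

/-- The matrix `D⁻¹ = diag(1, 2) ⊗ I_m`. -/
noncomputable def Dinv (m : ℕ) : Matrix (Fin 2 × Fin m) (Fin 2 × Fin m) ℝ :=
  Matrix.of fun p q => if p = q then (if p.1 = 0 then 1 else 2) else 0

/-- The mask `B` with symbol `zI`: `B_1 = I`, `B_k = 0` otherwise. -/
noncomputable def Bmask (m : ℕ) : ℤ → Matrix (Fin 2 × Fin m) (Fin 2 × Fin m) ℝ :=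
  fun k => if k = 1 then 1 else 0

/-- The mask `At = D⁻¹ δ`. -/
noncomputable def Amask' (m : ℕ) : ℤ → Matrix (Fin 2 × Fin m) (Fin 2 × Fin m) ℝ :=
  fun k => if k = 0 then Dinv m else 0

section Aux

variable {m : ℕ}

lemma Dmat_eq (m : ℕ) :
    Dmat m = Matrix.diagonal (fun p : Fin 2 × Fin m => if p.1 = 0 then (1 : ℝ) else 1 / 2) := rfl

lemma Dinv_eq (m : ℕ) :
    Dinv m = Matrix.diagonal (fun p : Fin 2 × Fin m => if p.1 = 0 then (1 : ℝ) else 2) := rfl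

lemma Dinv_mul_Dmat (m : ℕ) : Dinv m * Dmat m = 1 := by
  have h : (fun p : Fin 2 × Fin m =>
      (if p.1 = 0 then (1 : ℝ) else 2) * (if p.1 = 0 then (1 : ℝ) else 1 / 2)) =
      fun _ => 1 := by
    funext p; by_cases h : p.1 = 0 <;> simp [h]
  rw [Dinv_eq, Dmat_eq, Matrix.diagonal_mul_diagonal, h, Matrix.diagonal_one]

lemma Dmat_mul_Dinv (m : ℕ) : Dmat m * Dinv m = 1 := by
  have h : (fun p : Fin 2 × Fin m =>
      (if p.1 = 0 then (1 : ℝ) else 1 / 2) * (if p.1 = 0 then (1 : ℝ) else 2)) =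
      fun _ => 1 := by
    funext p; by_cases h : p.1 = 0 <;> simp [h]
  rw [Dmat_eq, Dinv_eq, Matrix.diagonal_mul_diagonal, h, Matrix.diagonal_one]

lemma Dinv_transpose (m : ℕ) : (Dinv m)ᵀ = Dinv m := by
  rw [Dinv_eq, Matrix.diagonal_transpose]

lemma subd_even (A : ℤ → Matrix (Fin 2 × Fin m) (Fin 2 × Fin m) ℝ)
    (hinterp : ∀ j : ℤ, A (2 * j) = if j = 0 then Dmat m else 0)
    (c : ℤ → Fin 2 × Fin m → ℝ) (j : ℤ) :
    subd A c (2 * j) = (Dmat m).mulVec (c j) := by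
  unfold subd
  rw [finsum_eq_single _ j]
  · have h : 2 * j - 2 * j = 2 * (0 : ℤ) := by ring
    rw [h, hinterp, if_pos rfl]
  · intro k hk
    have h : 2 * j - 2 * k = 2 * (j - k) := by ring
    rw [h, hinterp, if_neg (sub_ne_zero.mpr fun h' => hk h'.symm), Matrix.zero_mulVec]

lemma subdB_even (c : ℤ → Fin 2 × Fin m → ℝ) (j : ℤ) :
    subd (Bmask m) c (2 * j) = 0 := by
  unfold subd
  apply finsum_eq_zero_of_forall_eq_zero
  intro k
  have h : 2 * j - 2 * k ≠ 1 := by omega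
  rw [Bmask, if_neg h, Matrix.zero_mulVec]

end Aux

/-- The prediction-correction filters `B`, `At = D⁻¹δ`, and `Bt` with
`(Btᵀ)_k = (−1)^{1−k} A_{1−k} D⁻¹`, built from an interpolatory predictor `A`,
form a biorthogonal system. -/
theorem pred_corr_biorthogonal {m : ℕ}
    (A : ℤ → Matrix (Fin 2 × Fin m) (Fin 2 × Fin m) ℝ)
    (hA : (Function.support A).Finite)
    (hinterp : ∀ j : ℤ, A (2 * j) = if j = 0 then Dmat m else 0)
    (BtT : ℤ → Matrix (Fin 2 × Fin m) (Fin 2 × Fin m) ℝ)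
    (hBtT : ∀ k : ℤ, BtT k = ((-1 : ℝ) ^ (1 - k)) • (A (1 - k) * Dinv m)) :
    (∀ c : ℤ → Fin 2 × Fin m → ℝ, decomp (fun j => (Amask' m j)ᵀ) (subd A c) = c) ∧
    (∀ c : ℤ → Fin 2 × Fin m → ℝ, decomp BtT (subd (Bmask m) c) = c) ∧
    (∀ c : ℤ → Fin 2 × Fin m → ℝ, decomp (fun j => (Amask' m j)ᵀ) (subd (Bmask m) c) = 0) ∧
    (∀ c : ℤ → Fin 2 × Fin m → ℝ, decomp BtT (subd A c) = 0) := by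
  have hBtT_one : BtT 1 = 1 := by
    rw [hBtT]
    have h0 : (1 : ℤ) - 1 = 2 * 0 := by norm_num
    rw [h0, hinterp, if_pos rfl, Dmat_mul_Dinv]
    norm_num
  refine ⟨?_, ?_, ?_, ?_⟩
  · -- decomp Ãᵀ ∘ subd A = id
    intro c
    funext j
    show (∑ᶠ i : ℤ, ((Amask' m (i - 2 * j))ᵀ).mulVec (subd A c i)) = c j
    rw [finsum_eq_single _ (2 * j)]
    · have h : 2 * j - 2 * j = (0 : ℤ) := by ring
      rw [h, subd_even A hinterp c j]
      rw [show Amask' m 0 = Dinv m from if_pos rfl, Dinv_transpose,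
        Matrix.mulVec_mulVec, Dinv_mul_Dmat, Matrix.one_mulVec]
    · intro i hi
      rw [show Amask' m (i - 2 * j) = 0 from if_neg (sub_ne_zero.mpr hi),
        Matrix.transpose_zero, Matrix.zero_mulVec]
  · -- decomp B̃ᵀ ∘ subd B = id
    intro c
    funext j
    show (∑ᶠ i : ℤ, (BtT (i - 2 * j)).mulVec (subd (Bmask m) c i)) = c j
    rw [finsum_eq_single _ (2 * j + 1)]
    · have h : 2 * j + 1 - 2 * j = (1 : ℤ) := by ring
      rw [h, hBtT_one, Matrix.one_mulVec]
      unfold subd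
      rw [finsum_eq_single _ j]
      · rw [show (2 * j + 1 - 2 * j : ℤ) = 1 from by ring, Bmask, if_pos rfl,
          Matrix.one_mulVec]
      · intro k hk
        have h' : 2 * j + 1 - 2 * k ≠ 1 := by omega
        rw [Bmask, if_neg h', Matrix.zero_mulVec]
    · intro i hi
      rcases Int.even_or_odd i with ⟨l, hl⟩ | ⟨l, hl⟩
      · have h2 : i = 2 * l := by omega
        rw [h2, subdB_even, Matrix.mulVec_zero]
      · have h2 : i = 2 * l + 1 := by omega
        have hlj : l ≠ j := by omega
        rw [hBtT]
        have h3 : 1 - (i - 2 * j) = 2 * (j - l) := by omega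
        rw [h3, hinterp, if_neg (sub_ne_zero.mpr fun h' => hlj h'.symm),
          Matrix.zero_mul, smul_zero, Matrix.zero_mulVec]
  · -- decomp Ãᵀ ∘ subd B = 0
    intro c
    funext j
    show (∑ᶠ i : ℤ, ((Amask' m (i - 2 * j))ᵀ).mulVec (subd (Bmask m) c i)) = 0
    rw [finsum_eq_single _ (2 * j)]
    · rw [subdB_even, Matrix.mulVec_zero]
    · intro i hi
      rw [show Amask' m (i - 2 * j) = 0 from if_neg (sub_ne_zero.mpr hi),
        Matrix.transpose_zero, Matrix.zero_mulVec]
  · -- decomp B̃ᵀ ∘ subd A = 0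
    intro c
    funext j
    show (∑ᶠ i : ℤ, (BtT (i - 2 * j)).mulVec (subd A c i)) = 0
    set f : ℤ → Fin 2 × Fin m → ℝ := fun i => (BtT (i - 2 * j)).mulVec (subd A c i) with hf
    have hsupp : (Function.support f).Finite := by
      apply (hA.image (fun a => 1 + 2 * j - a)).subset
      intro i hi
      have hB : BtT (i - 2 * j) ≠ 0 := by
        intro h
        apply hi
        simp only [hf, h, Matrix.zero_mulVec]
      have hAne : A (1 - (i - 2 * j)) ≠ 0 := by
        intro h
        apply hB
        rw [hBtT, h, Matrix.zero_mul, smul_zero]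
      exact ⟨1 - (i - 2 * j), hAne, by ring⟩
    have hst : Disjoint (Set.range fun l : ℤ => 2 * l) (Set.range fun l : ℤ => 2 * l + 1) := by
      rw [Set.disjoint_left]
      rintro a ⟨l, rfl⟩ ⟨l', h⟩
      simp only at h
      omega
    have huniv : (Set.range fun l : ℤ => 2 * l) ∪ (Set.range fun l : ℤ => 2 * l + 1) =
        Set.univ := by
      apply Set.eq_univ_of_forall
      intro i
      rcases Int.even_or_odd i with ⟨l, hl⟩ | ⟨l, hl⟩
      · exact Or.inl ⟨l, show (2 * l : ℤ) = i by omega⟩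
      · exact Or.inr ⟨l, show (2 * l + 1 : ℤ) = i by omega⟩
    have heven : ∀ l : ℤ, f (2 * l) = -((A (2 * (j - l) + 1)).mulVec (c l)) := by
      intro l
      have h1 : f (2 * l) = (BtT (2 * l - 2 * j)).mulVec ((Dmat m).mulVec (c l)) := by
        rw [hf]
        simp only
        rw [subd_even A hinterp c l]
      rw [h1, hBtT]
      have h2 : 1 - (2 * l - 2 * j) = 2 * (j - l) + 1 := by ring
      rw [h2]
      have hodd : Odd (2 * (j - l) + 1 : ℤ) := ⟨j - l, by ring⟩
      rw [hodd.neg_one_zpow, Matrix.smul_mulVec, Matrix.mulVec_mulVec,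
        mul_assoc, Dinv_mul_Dmat, mul_one, neg_one_smul]
    have hodd' : ∀ l : ℤ, l ≠ j → f (2 * l + 1) = 0 := by
      intro l hlj
      rw [hf]
      simp only
      rw [hBtT]
      have h3 : 1 - (2 * l + 1 - 2 * j) = 2 * (j - l) := by ring
      rw [h3, hinterp, if_neg (sub_ne_zero.mpr fun h' => hlj h'.symm),
        Matrix.zero_mul, smul_zero, Matrix.zero_mulVec]
    calc (∑ᶠ i : ℤ, f i) = ∑ᶠ i ∈ (Set.univ : Set ℤ), f i := (finsum_mem_univ f).symm
      _ = ∑ᶠ i ∈ (Set.range fun l : ℤ => 2 * l) ∪ (Set.range fun l : ℤ => 2 * l + 1), f i := by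
          rw [huniv]
      _ = (∑ᶠ i ∈ (Set.range fun l : ℤ => 2 * l), f i) +
          ∑ᶠ i ∈ (Set.range fun l : ℤ => 2 * l + 1), f i :=
        finsum_mem_union' hst (hsupp.subset Set.inter_subset_right)
          (hsupp.subset Set.inter_subset_right)
      _ = (∑ᶠ l : ℤ, f (2 * l)) + ∑ᶠ l : ℤ, f (2 * l + 1) := by
          rw [finsum_mem_range (fun a b h => by
              have h2 : 2 * a = 2 * b := h; omega),
            finsum_mem_range (fun a b h => by
              have h2 : 2 * a + 1 = 2 * b + 1 := h; omega)]
      _ = -(subd A c (2 * j + 1)) + subd A c (2 * j + 1) := by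
          congr 1
          · rw [finsum_congr heven, finsum_neg_distrib]
            congr 1
            unfold subd
            apply finsum_congr
            intro l
            rw [show (2 * j + 1 - 2 * l : ℤ) = 2 * (j - l) + 1 from by ring]
          · rw [finsum_eq_single _ j]
            · rw [hf]
              simp only
              rw [show (2 * j + 1 - 2 * j : ℤ) = 1 from by ring, hBtT_one,
                Matrix.one_mulVec]
            · exact hodd'
      _ = 0 := neg_add_cancel _
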